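/- Let x_f : Ω → ℝ^M and z : Ω → ℝ^I be square-integrable random vectors with covariance matrices C_{x_f z}, C_{x_f}, and C_z, and assume C_z is symmetric positive definite. Fix ŷ ∈ ℝ^I, set K := C_{x_f z} C_z^{-1}, and define x_a(ω) := x_f(ω) + K(ŷ − z(ω)). Then C_{x_f} − C_{x_a} = C_{x_f z} C_z^{-1} C_{x_f z}ᵀ is a positive semidefinite matrix; in particular C_{x_a} ≤ C_{x_f} in the Loewner ordering of symmetric matrices. -/

import Mathlib

open MeasureTheory Matrix

/-- The covariance matrix of two square-integrable random vectors:
`(C_{xz})_{m i} = E[(x_m − E[x_m])(z_i − E[z_i])]`. -/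
noncomputable def covMatrix {Ω : Type*} [MeasurableSpace Ω] (ℙ : Measure Ω)
    {M I : ℕ} (x : Ω → Fin M → ℝ) (z : Ω → Fin I → ℝ) : Matrix (Fin M) (Fin I) ℝ :=
  Matrix.of fun m i =>
    ∫ ω, (x ω m - ∫ ω', x ω' m ∂ℙ) * (z ω i - ∫ ω', z ω' i ∂ℙ) ∂ℙ


lemma memL2_mul_integrable {Ω : Type*} [MeasurableSpace Ω] {ℙ : Measure Ω}
    {f g : Ω → ℝ} (hf : MemLp f 2 ℙ) (hg : MemLp g 2 ℙ) :
    Integrable (fun ω => f ω * g ω) ℙ := by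
  have h : MemLp (f • g) 1 ℙ := hg.smul hf (hpqr := ⟨by simp [one_div, ENNReal.inv_two_add_inv_two]⟩)
  rw [memLp_one_iff_integrable] at h
  exact h

lemma integral_mul_sum {Ω : Type*} [MeasurableSpace Ω] {ℙ : Measure Ω}
    {I : ℕ} {f : Ω → ℝ} (hf : MemLp f 2 ℙ) {w : Fin I → Ω → ℝ}
    (hw : ∀ i, MemLp (w i) 2 ℙ) (c : Fin I → ℝ) :
    ∫ ω, f ω * ∑ i, c i * w i ω ∂ℙ = ∑ i, c i * ∫ ω, f ω * w i ω ∂ℙ := by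
  have h1 : ∀ ω, f ω * ∑ i, c i * w i ω = ∑ i, c i * (f ω * w i ω) := by
    intro ω; rw [Finset.mul_sum]; exact Finset.sum_congr rfl fun i _ => by ring
  simp only [h1]
  rw [integral_finset_sum _ (fun i _ => ((memL2_mul_integrable hf (hw i)).const_mul (c i)))]
  exact Finset.sum_congr rfl fun i _ => integral_const_mul _ _

/-- The posterior covariance decreases in the Loewner ordering:
`C_{x_f} − C_{x_a} = C_{x_f z} C_z⁻¹ C_{x_f z}ᵀ` is positive semidefinite. -/
theorem kalman_covariance_decreases
    {Ω : Type*} [MeasurableSpace Ω] (ℙ : Measure Ω) [IsProbabilityMeasure ℙ]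
    {M I : ℕ} (x_f : Ω → Fin M → ℝ) (z : Ω → Fin I → ℝ)
    (hx : ∀ m, MemLp (fun ω => x_f ω m) 2 ℙ) (hz : ∀ i, MemLp (fun ω => z ω i) 2 ℙ)
    (hCz : (covMatrix ℙ z z).PosDef)
    (yhat : Fin I → ℝ)
    (K : Matrix (Fin M) (Fin I) ℝ) (hK : K = covMatrix ℙ x_f z * (covMatrix ℙ z z)⁻¹)
    (x_a : Ω → Fin M → ℝ) (hxa : x_a = fun ω => x_f ω + K.mulVec (yhat - z ω)) :
    covMatrix ℙ x_f x_f - covMatrix ℙ x_a x_a =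
        covMatrix ℙ x_f z * (covMatrix ℙ z z)⁻¹ * (covMatrix ℙ x_f z)ᵀ ∧
      (covMatrix ℙ x_f x_f - covMatrix ℙ x_a x_a).PosSemidef := by
  classical
  set u : Fin M → Ω → ℝ := fun m ω => x_f ω m - ∫ ω', x_f ω' m ∂ℙ with hudef
  set w : Fin I → Ω → ℝ := fun i ω => z ω i - ∫ ω', z ω' i ∂ℙ with hwdef
  have hu : ∀ m, MemLp (u m) 2 ℙ := fun m => (hx m).sub (memLp_const _)
  have hw : ∀ i, MemLp (w i) 2 ℙ := fun i => (hz i).sub (memLp_const _)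
  set S : Fin M → Ω → ℝ := fun m ω => ∑ i, K m i * w i ω with hSdef
  have hS : ∀ m, MemLp (S m) 2 ℙ :=
    fun m => memLp_finset_sum _ fun i _ => (hw i).const_mul (K m i)
  -- the mean of x_a
  have hmean : ∀ m, ∫ ω, x_a ω m ∂ℙ
      = (∫ ω, x_f ω m ∂ℙ) + ∑ i, K m i * (yhat i - ∫ ω', z ω' i ∂ℙ) := by
    intro m
    have h1 : ∀ ω, x_a ω m = x_f ω m + ∑ i, K m i * (yhat i - z ω i) := by
      intro ω; simp [hxa, Matrix.mulVec, dotProduct]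
    have hint : ∀ i ∈ Finset.univ,
        Integrable (fun ω => K m i * (yhat i - z ω i)) ℙ :=
      fun i _ => ((integrable_const (yhat i)).sub ((hz i).integrable one_le_two)).const_mul _
    simp only [h1]
    rw [integral_add ((hx m).integrable one_le_two) (integrable_finset_sum _ hint),
      integral_finset_sum _ hint]
    congr 1
    refine Finset.sum_congr rfl fun i _ => ?_
    rw [integral_const_mul, integral_sub (integrable_const _) ((hz i).integrable one_le_two)]
    simp
  -- the centered x_a
  have hcent : ∀ m ω, x_a ω m - ∫ ω', x_a ω' m ∂ℙ = u m ω - S m ω := by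
    intro m ω
    rw [hmean m]
    have h1 : x_a ω m = x_f ω m + ∑ i, K m i * (yhat i - z ω i) := by
      simp [hxa, Matrix.mulVec, dotProduct]
    rw [h1]
    have h2 : (∑ i, K m i * (yhat i - z ω i))
        - ∑ i, K m i * (yhat i - ∫ ω', z ω' i ∂ℙ) = -S m ω := by
      rw [← Finset.sum_sub_distrib, hSdef, ← Finset.sum_neg_distrib]
      exact Finset.sum_congr rfl fun i _ => by simp only [hwdef]; ring
    have h3 : u m ω = x_f ω m - ∫ ω', x_f ω' m ∂ℙ := rfl
    have h4 : (∑ i, K m i * (yhat i - z ω i)) =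
        (∑ i, K m i * (yhat i - ∫ ω', z ω' i ∂ℙ)) + -S m ω := by linarith
    rw [h3]; rw [h4]; ring
  -- entrywise expansion of the posterior covariance
  have hCxz : ∀ m j, covMatrix ℙ x_f z m j = ∫ ω, u m ω * w j ω ∂ℙ := fun m j => rfl
  have hCzz : ∀ i j, covMatrix ℙ z z i j = ∫ ω, w i ω * w j ω ∂ℙ := fun i j => rfl
  have hCzsym : ∀ i j, covMatrix ℙ z z i j = covMatrix ℙ z z j i := by
    intro i j
    rw [hCzz, hCzz]
    congr 1; funext ω; ring
  have hA : covMatrix ℙ x_a x_a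
      = covMatrix ℙ x_f x_f - covMatrix ℙ x_f z * Kᵀ
        - K * (covMatrix ℙ x_f z)ᵀ + K * covMatrix ℙ z z * Kᵀ := by
    ext m n
    have e0 : covMatrix ℙ x_a x_a m n
        = ∫ ω, (u m ω - S m ω) * (u n ω - S n ω) ∂ℙ := by
      show (∫ ω, (x_a ω m - ∫ ω', x_a ω' m ∂ℙ) * (x_a ω n - ∫ ω', x_a ω' n ∂ℙ) ∂ℙ) = _
      congr 1; funext ω; rw [hcent m ω, hcent n ω]
    have hexp : ∀ ω, (u m ω - S m ω) * (u n ω - S n ω)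
        = u m ω * u n ω - u m ω * S n ω - S m ω * u n ω + S m ω * S n ω :=
      fun ω => by ring
    have i1 := memL2_mul_integrable (hu m) (hu n)
    have i2 := memL2_mul_integrable (hu m) (hS n)
    have i3 := memL2_mul_integrable (hS m) (hu n)
    have i4 := memL2_mul_integrable (hS m) (hS n)
    have e1 : ∫ ω, (u m ω - S m ω) * (u n ω - S n ω) ∂ℙ
        = (∫ ω, u m ω * u n ω ∂ℙ) - (∫ ω, u m ω * S n ω ∂ℙ)
          - (∫ ω, S m ω * u n ω ∂ℙ) + ∫ ω, S m ω * S n ω ∂ℙ := by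
      simp only [hexp]
      have i12 : Integrable (fun ω => u m ω * u n ω - u m ω * S n ω) ℙ := i1.sub i2
      have i123 : Integrable
          (fun ω => u m ω * u n ω - u m ω * S n ω - S m ω * u n ω) ℙ := i12.sub i3
      rw [integral_add i123 i4, integral_sub i12 i3, integral_sub i1 i2]
    -- cross terms
    have c2 : ∫ ω, u m ω * S n ω ∂ℙ = ∑ j, K n j * covMatrix ℙ x_f z m j := by
      rw [show (fun ω => u m ω * S n ω) = fun ω => u m ω * ∑ j, K n j * w j ω from rfl]
      rw [integral_mul_sum (hu m) hw (K n)]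
      exact Finset.sum_congr rfl fun j _ => by rw [hCxz]
    have c3 : ∫ ω, S m ω * u n ω ∂ℙ = ∑ i, K m i * covMatrix ℙ x_f z n i := by
      have : ∀ ω, S m ω * u n ω = u n ω * S m ω := fun ω => by ring
      simp only [this]
      rw [show (fun ω => u n ω * S m ω) = fun ω => u n ω * ∑ i, K m i * w i ω from rfl]
      rw [integral_mul_sum (hu n) hw (K m)]
      exact Finset.sum_congr rfl fun i _ => by rw [hCxz]
    have c4 : ∫ ω, S m ω * S n ω ∂ℙ
        = ∑ j, K n j * ∑ i, K m i * covMatrix ℙ z z j i := by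
      rw [show (fun ω => S m ω * S n ω) = fun ω => S m ω * ∑ j, K n j * w j ω from rfl]
      rw [integral_mul_sum (hS m) hw (K n)]
      refine Finset.sum_congr rfl fun j _ => ?_
      congr 1
      have : ∀ ω, S m ω * w j ω = w j ω * S m ω := fun ω => by ring
      simp only [this]
      rw [show (fun ω => w j ω * S m ω) = fun ω => w j ω * ∑ i, K m i * w i ω from rfl]
      rw [integral_mul_sum (hw j) hw (K m)]
      exact Finset.sum_congr rfl fun i _ => by rw [hCzz]
    have c1 : (∫ ω, u m ω * u n ω ∂ℙ) = covMatrix ℙ x_f x_f m n := rfl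
    rw [e0, e1, c1, c2, c3, c4]
    simp only [Matrix.sub_apply, Matrix.add_apply, Matrix.mul_apply, Matrix.transpose_apply]
    have s1 : ∑ j, K n j * covMatrix ℙ x_f z m j
        = ∑ j, covMatrix ℙ x_f z m j * K n j :=
      Finset.sum_congr rfl fun j _ => mul_comm _ _
    have s2 : (∑ j, K n j * ∑ i, K m i * covMatrix ℙ z z j i)
        = ∑ j, (∑ i, K m i * covMatrix ℙ z z i j) * K n j := by
      refine Finset.sum_congr rfl fun j _ => ?_
      rw [Finset.mul_sum, Finset.sum_mul]
      exact Finset.sum_congr rfl fun i _ => by rw [hCzsym j i]; ring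
    rw [s1, s2]
  -- matrix algebra
  set Cxz := covMatrix ℙ x_f z
  set Czz := covMatrix ℙ z z
  have hdet : IsUnit Czz.det := isUnit_iff_ne_zero.mpr hCz.det_pos.ne'
  have hsymm : Czzᵀ = Czz := by
    ext i j; rw [Matrix.transpose_apply]; exact hCzsym j i
  have hKT : Kᵀ = Czz⁻¹ * Cxzᵀ := by
    rw [hK, Matrix.transpose_mul, Matrix.transpose_nonsing_inv, hsymm]
  have e1 : Cxz * Kᵀ = Cxz * Czz⁻¹ * Cxzᵀ := by rw [hKT, ← Matrix.mul_assoc]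
  have e2 : K * Cxzᵀ = Cxz * Czz⁻¹ * Cxzᵀ := by rw [hK]
  have e3 : K * Czz * Kᵀ = Cxz * Czz⁻¹ * Cxzᵀ := by
    rw [hKT, hK, Matrix.nonsing_inv_mul_cancel_right _ _ hdet, ← Matrix.mul_assoc]
  have key : covMatrix ℙ x_f x_f - covMatrix ℙ x_a x_a = Cxz * Czz⁻¹ * Cxzᵀ := by
    rw [hA, e1]
    rw [show covMatrix ℙ x_f x_f -
        (covMatrix ℙ x_f x_f - Cxz * Czz⁻¹ * Cxzᵀ - K * Cxzᵀ + K * Czz * Kᵀ)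
        = Cxz * Czz⁻¹ * Cxzᵀ + K * Cxzᵀ - K * Czz * Kᵀ from by abel]
    rw [e2, e3]; abel
  refine ⟨key, ?_⟩
  rw [key]
  have hps := (hCz.inv).posSemidef.mul_mul_conjTranspose_same Cxz
  rwa [Matrix.conjTranspose_eq_transpose_of_trivial] at hps
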